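/- For a complete k-partite graph K_{n_1,...,n_k} with k ≥ 3 and 1 ≤ n_1 ≤ n_2 ≤ ... ≤ n_k, the outer independent double Roman domination number equals n_1 + n_2 + ... + n_{k-1} + 2. -/

import Mathlib

open SimpleGraph Finset

/-- Outer independent double Roman dominating function. -/
def IsOIDRDF {V : Type*} (G : SimpleGraph V) (f : V → ℕ) : Prop :=
  (∀ v, f v ≤ 3) ∧
  (∀ v, f v = 0 → (∃ u, G.Adj v u ∧ f u = 3) ∨
    (∃ u w, u ≠ w ∧ G.Adj v u ∧ G.Adj v w ∧ f u = 2 ∧ f w = 2)) ∧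
  (∀ v, f v = 1 → ∃ u, G.Adj v u ∧ 2 ≤ f u) ∧
  (∀ u v, G.Adj u v → f u = 0 → f v ≠ 0)

/-- Outer independent double Roman domination number. -/
noncomputable def oidRNum {V : Type*} (G : SimpleGraph V) [Fintype V] : ℕ :=
  sInf {w | ∃ f : V → ℕ, IsOIDRDF G f ∧ w = ∑ v, f v}

/-- Outer independent Roman dominating function. -/
def IsOIRDF {V : Type*} (G : SimpleGraph V) (f : V → ℕ) : Prop :=
  (∀ v, f v ≤ 2) ∧
  (∀ v, f v = 0 → ∃ u, G.Adj v u ∧ f u = 2) ∧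
  (∀ u v, G.Adj u v → f u = 0 → f v ≠ 0)

/-- Outer independent Roman domination number. -/
noncomputable def oiRNum {V : Type*} (G : SimpleGraph V) [Fintype V] : ℕ :=
  sInf {w | ∃ f : V → ℕ, IsOIRDF G f ∧ w = ∑ v, f v}

/-- Vertex cover number. -/
noncomputable def coverNum {V : Type*} (G : SimpleGraph V) [Fintype V] : ℕ :=
  sInf {k | ∃ S : Finset V, S.card = k ∧ ∀ u v, G.Adj u v → u ∈ S ∨ v ∈ S}

/-- Domination number. -/
noncomputable def domNum {V : Type*} (G : SimpleGraph V) [Fintype V] : ℕ :=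
  sInf {k | ∃ S : Finset V, S.card = k ∧ ∀ v, v ∉ S → ∃ u ∈ S, G.Adj v u}

/-- Independence number. -/
noncomputable def indNum {V : Type*} (G : SimpleGraph V) [Fintype V] : ℕ :=
  sSup {k | ∃ S : Finset V, S.card = k ∧ ∀ u ∈ S, ∀ v ∈ S, ¬ G.Adj u v}

/-- Maximum degree. -/
noncomputable def maxDeg {V : Type*} (G : SimpleGraph V) [Fintype V] : ℕ :=
  sSup (Set.range fun v => Nat.card {u | G.Adj v u})

/-- Underlying relation for the corona product. -/
def coronaRel {V W : Type*} (G : SimpleGraph V) (H : SimpleGraph W) :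
    (V ⊕ V × W) → (V ⊕ V × W) → Prop
  | Sum.inl u, Sum.inl v => G.Adj u v
  | Sum.inl u, Sum.inr p => u = p.1
  | Sum.inr p, Sum.inl u => u = p.1
  | Sum.inr p, Sum.inr q => p.1 = q.1 ∧ H.Adj p.2 q.2

/-- The corona product `G ⊙ H`. -/
def corona {V W : Type*} (G : SimpleGraph V) (H : SimpleGraph W) :
    SimpleGraph (V ⊕ V × W) :=
  SimpleGraph.fromRel (coronaRel G H)

private lemma partSum (k : ℕ) (n : Fin k → ℕ) (j : Fin k) :
    ∑ v : Σ i : Fin k, Fin (n i), (if v.1 = j then 0 else 1) = ∑ i ∈ univ.erase j, n i := by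
  rw [← Finset.univ_sigma_univ, Finset.sum_sigma]
  rw [← Finset.add_sum_erase _ _ (mem_univ j)]
  simp only [if_pos rfl, if_true, eq_self_iff_true, Finset.sum_const_zero, zero_add]
  apply Finset.sum_congr rfl
  intro i hi
  simp [Finset.ne_of_mem_erase hi]

theorem stmt4 (k : ℕ) (hk : 3 ≤ k) (n : Fin k → ℕ) (hpos : ∀ i, 1 ≤ n i)
    (hmono : Monotone n) :
    oidRNum (completeMultipartiteGraph (fun i : Fin k => Fin (n i))) =
      (∑ i ∈ Finset.univ.erase ⟨k - 1, by omega⟩, n i) + 2 := by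
  classical
  set G := completeMultipartiteGraph (fun i : Fin k => Fin (n i)) with hG
  have hadj : ∀ v w : Σ i : Fin k, Fin (n i), G.Adj v w ↔ v.1 ≠ w.1 := by
    intro v w; simp [hG]
  set L : Fin k := ⟨k - 1, by omega⟩ with hL
  set S : ℕ := ∑ i ∈ Finset.univ.erase L, n i with hS
  -- total sum
  have htot : ∀ j : Fin k, (∑ i ∈ univ.erase j, n i) + n j = ∑ i, n i := by
    intro j
    rw [← Finset.add_sum_erase _ _ (mem_univ j)]; omega
  have hSle : ∀ j : Fin k, S ≤ ∑ i ∈ univ.erase j, n i := by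
    intro j
    have h1 := htot j
    have h2 := htot L
    have hj : n j ≤ n L := hmono (by
      show j.val ≤ L.val
      have := j.isLt
      simp only [hL]
      omega)
    omega
  have hSpos : S + 1 ≤ ∑ i, n i := by
    have := htot L
    have := hpos L
    omega
  -- special vertices for the upper bound
  set i0 : Fin k := ⟨0, by omega⟩ with hi0
  set i1 : Fin k := ⟨1, by omega⟩ with hi1
  have hi01 : i0 ≠ i1 := by simp [hi0, hi1, Fin.ext_iff]
  have hi0L : i0 ≠ L := by simp [hi0, hL, Fin.ext_iff]; omega
  have hi1L : i1 ≠ L := by simp [hi1, hL, Fin.ext_iff]; omega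
  set s0 : Σ i : Fin k, Fin (n i) := ⟨i0, ⟨0, hpos i0⟩⟩ with hs0
  set s1 : Σ i : Fin k, Fin (n i) := ⟨i1, ⟨0, hpos i1⟩⟩ with hs1
  have hs01 : s0 ≠ s1 := by
    intro h
    exact hi01 (congrArg Sigma.fst h)
  set fup : (Σ i : Fin k, Fin (n i)) → ℕ :=
    fun v => (if v.1 = L then 0 else 1) + (if v = s0 then 1 else 0) + (if v = s1 then 1 else 0)
    with hfup
  have hfups0 : fup s0 = 2 := by simp [hfup, hs01, hi0L]; exact hi0L
  have hfups1 : fup s1 = 2 := by simp [hfup, hs01.symm, hi1L]; exact hi1L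
  have hfup0 : ∀ v, fup v = 0 → v.1 = L := by
    intro v hv
    by_contra hne
    simp [hfup, hne] at hv
  have hmem : S + 2 ∈ {w | ∃ f : (Σ i : Fin k, Fin (n i)) → ℕ, IsOIDRDF G f ∧ w = ∑ v, f v} := by
    refine ⟨fup, ⟨?_, ?_, ?_, ?_⟩, ?_⟩
    · intro v; simp only [hfup]; split_ifs <;> omega
    · intro v hv
      have hvL := hfup0 v hv
      refine Or.inr ⟨s0, s1, hs01, ?_, ?_, hfups0, hfups1⟩
      · rw [hadj]; rw [hvL]; exact fun h => hi0L h.symm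
      · rw [hadj]; rw [hvL]; exact fun h => hi1L h.symm
    · intro v hv
      by_cases hv0 : v.1 = i0
      · refine ⟨s1, ?_, by omega⟩
        rw [hadj]; rw [hv0]; exact hi01
      · refine ⟨s0, ?_, by omega⟩
        rw [hadj]; exact hv0
    · intro u v huv hu
      have h1 := hfup0 u hu
      intro hv
      have h2 := hfup0 v hv
      rw [hadj] at huv
      exact huv (h1.trans h2.symm)
    · rw [hfup]
      simp only [Finset.sum_add_distrib]
      rw [partSum k n L]
      simp [hS]
  apply le_antisymm
  · exact Nat.sInf_le hmem
  · apply le_csInf ⟨S + 2, hmem⟩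
    rintro w ⟨f, ⟨hle, h0, h1, hind⟩, rfl⟩
    by_cases hz : ∃ z, f z = 0
    · obtain ⟨z, hz0⟩ := hz
      have hout : ∀ v : Σ i : Fin k, Fin (n i), v.1 ≠ z.1 → 1 ≤ f v := by
        intro v hv
        have := hind z v (by rw [hadj]; exact fun h => hv h.symm) hz0
        omega
      have hSz := hSle z.1
      rcases h0 z hz0 with ⟨u, hadju, hu3⟩ | ⟨u, w, huw, hadju, hadjw, hu2, hw2⟩
      · have hune : u.1 ≠ z.1 := by rw [hadj] at hadju; exact fun h => hadju h.symm
        have hgle : ∑ v : Σ i : Fin k, Fin (n i),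
            ((if v.1 = z.1 then 0 else 1) + (if v = u then 2 else 0)) ≤ ∑ v, f v := by
          apply Finset.sum_le_sum
          intro v _
          by_cases hvj : v.1 = z.1
          · have hvu : v ≠ u := fun h => hune (h ▸ hvj)
            simp [hvj, hvu]
          · by_cases hvu : v = u
            · subst hvu; simp [hvj]; omega
            · simp [hvj, hvu]; exact hout v hvj
        rw [Finset.sum_add_distrib, partSum k n z.1] at hgle
        simp at hgle
        omega
      · have hune : u.1 ≠ z.1 := by rw [hadj] at hadju; exact fun h => hadju h.symm
        have hwne : w.1 ≠ z.1 := by rw [hadj] at hadjw; exact fun h => hadjw h.symm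
        have hgle : ∑ v : Σ i : Fin k, Fin (n i),
            ((if v.1 = z.1 then 0 else 1) + ((if v = u then 1 else 0) + (if v = w then 1 else 0)))
            ≤ ∑ v, f v := by
          apply Finset.sum_le_sum
          intro v _
          by_cases hvj : v.1 = z.1
          · have hvu : v ≠ u := fun h => hune (h ▸ hvj)
            have hvw : v ≠ w := fun h => hwne (h ▸ hvj)
            simp [hvj, hvu, hvw]
          · by_cases hvu : v = u
            · subst hvu; simp [hvj, huw]; omega
            · by_cases hvw : v = w
              · subst hvw; simp [hvj, hvu]; omega
              · simp [hvj, hvu, hvw]; exact hout v hvj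
        rw [Finset.sum_add_distrib, partSum k n z.1] at hgle
        simp [Finset.sum_add_distrib, hs01] at hgle
        omega
    · push_neg at hz
      have hall : ∀ v, 1 ≤ f v := fun v => Nat.one_le_iff_ne_zero.mpr (hz v)
      have hcard : ∑ v : Σ i : Fin k, Fin (n i), (1 : ℕ) = ∑ i, n i := by
        simp [Finset.card_univ]
      by_cases h1ex : ∃ v, f v = 1
      · obtain ⟨v, hv1⟩ := h1ex
        obtain ⟨u, hadju, hu2⟩ := h1 v hv1
        have hgle : ∑ v' : Σ i : Fin k, Fin (n i),
            ((1 : ℕ) + (if v' = u then 1 else 0)) ≤ ∑ v', f v' := by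
          apply Finset.sum_le_sum
          intro v' _
          by_cases hvu : v' = u
          · subst hvu; simp; omega
          · simp [hvu]; exact hall v'
        rw [Finset.sum_add_distrib, hcard] at hgle
        simp at hgle
        omega
      · push_neg at h1ex
        have hall2 : ∀ v, 2 ≤ f v := by
          intro v
          have := hall v
          have := h1ex v
          omega
        have hgle : ∑ v : Σ i : Fin k, Fin (n i), (2 : ℕ) ≤ ∑ v, f v :=
          Finset.sum_le_sum fun v _ => hall2 v
        have h2c : ∑ v : Σ i : Fin k, Fin (n i), (2 : ℕ) = 2 * ∑ i, n i := by
          rw [Finset.sum_const, smul_eq_mul, Finset.card_univ]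
          simp [mul_comm]
        omega
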